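/- (Proposition 1, high-power regime.) Fix |h|² > 0 and let R_P(t) = (1 − t)(1 − P_e(P, t)) for t ∈ (0,1), where P_e(P, t) = ½(1 − √(1 − exp(−4·P·|h|²·t/(1−t)))). Then for every ε > 0 there exists P₀ such that for all P ≥ P₀, every t ∈ (0,1) satisfying R_P(t) = sup_{s ∈ (0,1)} R_P(s) satisfies t < ε; moreover sup_{t ∈ (0,1)} R_P(t) → 1 as P → ∞. -/

import Mathlib

open Filter Topology

lemma keylim (h2 δ : ℝ) (hh2 : 0 < h2) (hδ0 : 0 < δ) (hδ1 : δ < 1) :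
    Tendsto (fun P => (1 - δ) * (1 - (1 / 2) *
      (1 - Real.sqrt (1 - Real.exp (-(4 * P * h2 * δ / (1 - δ))))))) atTop (𝓝 (1 - δ)) := by
  have hc : 0 < 4 * h2 * δ / (1 - δ) := by
    apply div_pos (by nlinarith) (by linarith)
  have h1 : Tendsto (fun P : ℝ => 4 * P * h2 * δ / (1 - δ)) atTop atTop := by
    have := Tendsto.atTop_mul_const hc (tendsto_id : Tendsto (fun P:ℝ => P) atTop atTop)
    refine this.congr (fun P => by field_simp; simp only [id])
  have h2' : Tendsto (fun P : ℝ => Real.exp (-(4 * P * h2 * δ / (1 - δ)))) atTop (𝓝 0) :=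
    Real.tendsto_exp_atBot.comp (tendsto_neg_atBot_iff.mpr h1)
  have hcont : Continuous (fun x : ℝ => (1 - δ) * (1 - (1 / 2) * (1 - Real.sqrt (1 - x)))) := by
    continuity
  have := (hcont.tendsto 0).comp h2'
  simpa [Real.sqrt_one, Function.comp_def] using this

theorem optimal_t_vanishes_high_power (h2 : ℝ) (hh2 : 0 < h2)
    (Pe : ℝ → ℝ → ℝ) (R : ℝ → ℝ → ℝ)
    (hPe : ∀ P s : ℝ,
      Pe P s = (1 / 2) * (1 - Real.sqrt (1 - Real.exp (-(4 * P * h2 * s / (1 - s))))))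
    (hR : ∀ P s : ℝ, R P s = (1 - s) * (1 - Pe P s)) :
    (∀ ε > (0 : ℝ), ∃ P₀ : ℝ, ∀ P ≥ P₀, ∀ t ∈ Set.Ioo (0 : ℝ) 1,
      R P t = sSup (R P '' Set.Ioo (0 : ℝ) 1) → t < ε) ∧
    Tendsto (fun P => sSup (R P '' Set.Ioo (0 : ℝ) 1)) atTop (𝓝 1) := by
  -- upper bound R P s ≤ 1 - s on Ioo 0 1
  have hub : ∀ P : ℝ, ∀ s ∈ Set.Ioo (0 : ℝ) 1, R P s ≤ 1 - s := by
    intro P s hs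
    rw [hR, hPe]
    have hsq : Real.sqrt (1 - Real.exp (-(4 * P * h2 * s / (1 - s)))) ≤ 1 := by
      apply Real.sqrt_le_one.mpr
      have := Real.exp_pos (-(4 * P * h2 * s / (1 - s)))
      linarith
    have hsq0 : 0 ≤ Real.sqrt (1 - Real.exp (-(4 * P * h2 * s / (1 - s)))) := Real.sqrt_nonneg _
    nlinarith [hs.1, hs.2]
  have hbdd : ∀ P : ℝ, BddAbove (R P '' Set.Ioo (0 : ℝ) 1) := by
    intro P
    refine ⟨1, ?_⟩
    rintro x ⟨s, hs, rfl⟩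
    have := hub P s hs
    linarith [hs.1]
  have hsup_le : ∀ P : ℝ, sSup (R P '' Set.Ioo (0 : ℝ) 1) ≤ 1 := by
    intro P
    apply Real.sSup_le _ zero_le_one
    rintro x ⟨s, hs, rfl⟩
    have := hub P s hs
    linarith [hs.1]
  have hRδ : ∀ δ : ℝ, 0 < δ → δ < 1 → Tendsto (fun P => R P δ) atTop (𝓝 (1 - δ)) := by
    intro δ h0 h1
    have := keylim h2 δ hh2 h0 h1
    refine this.congr (fun P => by rw [hR, hPe])
  have hsup_ge : ∀ δ : ℝ, 0 < δ → δ < 1 → ∀ P : ℝ,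
      R P δ ≤ sSup (R P '' Set.Ioo (0 : ℝ) 1) := by
    intro δ h0 h1 P
    exact le_csSup (hbdd P) ⟨δ, ⟨h0, h1⟩, rfl⟩
  constructor
  · intro ε hε
    set δ := min (ε / 2) (1 / 2) with hδdef
    have h0 : 0 < δ := lt_min (by linarith) (by norm_num)
    have h1 : δ < 1 := lt_of_le_of_lt (min_le_right _ _) (by norm_num)
    have hδε : δ ≤ ε / 2 := min_le_left _ _
    have hlim := hRδ δ h0 h1
    have hev : ∀ᶠ P in atTop, 1 - ε < R P δ :=
      hlim.eventually (eventually_gt_nhds (by linarith : (1:ℝ) - ε < 1 - δ))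
    obtain ⟨P₀, hP₀⟩ := eventually_atTop.mp hev
    refine ⟨P₀, fun P hP t ht hmax => ?_⟩
    have h1t : R P t ≤ 1 - t := hub P t ht
    have h2t : 1 - ε < R P t := by
      rw [hmax]
      exact lt_of_lt_of_le (hP₀ P hP) (hsup_ge δ h0 h1 P)
    linarith
  · rw [tendsto_order]
    constructor
    · intro a ha
      set δ := min ((1 - a) / 2) (1 / 2) with hδdef
      have h0 : 0 < δ := lt_min (by linarith) (by norm_num)
      have h1 : δ < 1 := lt_of_le_of_lt (min_le_right _ _) (by norm_num)
      have hδa : δ ≤ (1 - a) / 2 := min_le_left _ _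
      have hev : ∀ᶠ P in atTop, a < R P δ :=
        (hRδ δ h0 h1).eventually (eventually_gt_nhds (by linarith : a < 1 - δ))
      filter_upwards [hev] with P hP
      exact lt_of_lt_of_le hP (hsup_ge δ h0 h1 P)
    · intro b hb
      exact Eventually.of_forall fun P => lt_of_le_of_lt (hsup_le P) hb
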